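/- Let f : ℝ^n → ℝ^n be globally Lipschitz continuous with Lipschitz constant L_f, and let L_+ ∈ ℝ satisfy ⟨f(x) − f(y), x − y⟩ ≤ L_+ ‖x − y‖² for all x, y ∈ ℝ^n. Then for any ensemble of M ≥ 2 vectors x^1, …, x^M ∈ ℝ^n with empirical mean x̄ and ensemble spread V, setting f̄ = (1/M) Σ_{i=1}^M f(x^i), and for any z ∈ ℝ^n with E = ‖z − x̄‖²/2, one has ⟨f(z) − f̄, z − x̄⟩ ≤ 2 L_+ E + √2 L_f V^{1/2} E^{1/2}. -/

import Mathlib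

open scoped BigOperators
open Matrix MeasureTheory

noncomputable section

/-- Squared Euclidean norm of a vector in ℝ^n. -/
def sqNorm {n : ℕ} (v : Fin n → ℝ) : ℝ := ∑ k, (v k) ^ 2

/-- Euclidean norm of a vector in ℝ^n. -/
def evNorm {n : ℕ} (v : Fin n → ℝ) : ℝ := Real.sqrt (sqNorm v)

/-- Euclidean inner product on ℝ^n. -/
def eip {n : ℕ} (v w : Fin n → ℝ) : ℝ := ∑ k, v k * w k

/-- Empirical mean of an ensemble of M vectors in ℝ^n. -/
def empMean (M n : ℕ) (x : Fin M → Fin n → ℝ) : Fin n → ℝ := (M : ℝ)⁻¹ • ∑ i, x i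

/-- Empirical covariance matrix of an ensemble of M vectors in ℝ^n. -/
def empCov (M n : ℕ) (x : Fin M → Fin n → ℝ) : Matrix (Fin n) (Fin n) ℝ :=
  Matrix.of fun k l =>
    ((M : ℝ) - 1)⁻¹ * ∑ i, (x i k - empMean M n x k) * (x i l - empMean M n x l)

/-- Ensemble spread (l²-norm of ensemble deviations from the mean). -/
def spread (M n : ℕ) (x : Fin M → Fin n → ℝ) : ℝ :=
  ((M : ℝ) - 1)⁻¹ * ∑ i, sqNorm (x i - empMean M n x)

/-- Frobenius norm of a matrix. -/
def frobNorm {m n : ℕ} (A : Matrix (Fin m) (Fin n) ℝ) : ℝ :=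
  Real.sqrt (∑ i, ∑ j, (A i j) ^ 2)

lemma sqNorm_nonneg {n : ℕ} (v : Fin n → ℝ) : 0 ≤ sqNorm v :=
  Finset.sum_nonneg fun _ _ => sq_nonneg _

lemma evNorm_nonneg {n : ℕ} (v : Fin n → ℝ) : 0 ≤ evNorm v := Real.sqrt_nonneg _

lemma evNorm_sq {n : ℕ} (v : Fin n → ℝ) : evNorm v ^ 2 = sqNorm v :=
  Real.sq_sqrt (sqNorm_nonneg v)

lemma eip_le_norm {n : ℕ} (v w : Fin n → ℝ) : eip v w ≤ evNorm v * evNorm w :=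
  Real.sum_mul_le_sqrt_mul_sqrt _ _ _

lemma eip_add_left {n : ℕ} (a b c : Fin n → ℝ) :
    eip (a + b) c = eip a c + eip b c := by
  simp [eip, ← Finset.sum_add_distrib, add_mul]

lemma sqNorm_add {n : ℕ} (a b : Fin n → ℝ) :
    sqNorm (a + b) = sqNorm a + 2 * eip a b + sqNorm b := by
  simp only [sqNorm, eip, Pi.add_apply, Finset.mul_sum, ← Finset.sum_add_distrib]
  exact Finset.sum_congr rfl fun k _ => by ring

lemma evNorm_add_le {n : ℕ} (a b : Fin n → ℝ) :
    evNorm (a + b) ≤ evNorm a + evNorm b := by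
  have h : sqNorm (a + b) ≤ (evNorm a + evNorm b) ^ 2 := by
    have := eip_le_norm a b
    have := evNorm_sq a; have := evNorm_sq b
    rw [sqNorm_add]; nlinarith
  calc evNorm (a + b) = Real.sqrt (sqNorm (a + b)) := rfl
    _ ≤ Real.sqrt ((evNorm a + evNorm b) ^ 2) := Real.sqrt_le_sqrt h
    _ = evNorm a + evNorm b := Real.sqrt_sq
      (by have := evNorm_nonneg a; have := evNorm_nonneg b; linarith)

lemma evNorm_zero {n : ℕ} : evNorm (0 : Fin n → ℝ) = 0 := by
  simp [evNorm, sqNorm]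

lemma evNorm_sum_le {n : ℕ} {ι : Type*} (s : Finset ι) (w : ι → Fin n → ℝ) :
    evNorm (∑ i ∈ s, w i) ≤ ∑ i ∈ s, evNorm (w i) := by
  classical
  induction s using Finset.induction with
  | empty => simp [evNorm_zero]
  | insert _ _ hi ih =>
    rw [Finset.sum_insert hi, Finset.sum_insert hi]
    exact (evNorm_add_le _ _).trans (by linarith)

lemma evNorm_smul {n : ℕ} (c : ℝ) (v : Fin n → ℝ) :
    evNorm (c • v) = |c| * evNorm v := by
  have : sqNorm (c • v) = c ^ 2 * sqNorm v := by
    simp [sqNorm, Finset.mul_sum, mul_pow]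
  rw [evNorm, this, Real.sqrt_mul (sq_nonneg c), Real.sqrt_sq_eq_abs, evNorm]

lemma evNorm_sub_symm {n : ℕ} (a b : Fin n → ℝ) : evNorm (a - b) = evNorm (b - a) := by
  have : sqNorm (a - b) = sqNorm (b - a) := by
    unfold sqNorm
    exact Finset.sum_congr rfl fun k _ => by simp [Pi.sub_apply]; ring
  simp [evNorm, this]

/-- Drift estimate for the squared estimation error of the EnKBF:
`⟨f(z) − f̄, z − x̄⟩ ≤ 2 L₊ E + √2 L_f V^{1/2} E^{1/2}`. -/
theorem drift_error_estimate {n M : ℕ} (hM : 2 ≤ M)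
    (f : (Fin n → ℝ) → Fin n → ℝ) (Lf Lp : ℝ) (hLf : 0 ≤ Lf)
    (hf : ∀ x y : Fin n → ℝ, evNorm (f x - f y) ≤ Lf * evNorm (x - y))
    (hLp : ∀ x y : Fin n → ℝ, eip (f x - f y) (x - y) ≤ Lp * sqNorm (x - y))
    (x : Fin M → Fin n → ℝ) (z : Fin n → ℝ) :
    eip (f z - (M : ℝ)⁻¹ • ∑ i, f (x i)) (z - empMean M n x) ≤
      2 * Lp * (sqNorm (z - empMean M n x) / 2) +
        Real.sqrt 2 * Lf * Real.sqrt (spread M n x) *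
          Real.sqrt (sqNorm (z - empMean M n x) / 2) := by
  set m : Fin n → ℝ := empMean M n x with hm
  set fb : Fin n → ℝ := (M : ℝ)⁻¹ • ∑ i, f (x i) with hfb
  have hMpos : (0 : ℝ) < M := by positivity
  have hM2 : (2 : ℝ) ≤ (M : ℝ) := by exact_mod_cast hM
  have hMne : (M : ℝ) ≠ 0 := ne_of_gt hMpos
  -- split
  have hsplit : eip (f z - fb) (z - m) =
      eip (f z - f m) (z - m) + eip (f m - fb) (z - m) := by
    have : f z - fb = (f z - f m) + (f m - fb) := by abel
    rw [this, eip_add_left]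
  -- first term
  have h1 : eip (f z - f m) (z - m) ≤ Lp * sqNorm (z - m) := hLp z m
  -- rewrite f m - fb as an average
  have hfm : f m - fb = (M : ℝ)⁻¹ • ∑ i, (f m - f (x i)) := by
    funext k
    simp only [Pi.sub_apply, Pi.smul_apply, Finset.sum_apply, smul_eq_mul,
      Finset.sum_sub_distrib, Finset.sum_const, Finset.card_univ, Fintype.card_fin,
      nsmul_eq_mul, hfb]
    field_simp
    rw [Pi.mul_apply, Pi.natCast_apply]
    ring
  -- Lipschitz bound on each term
  have hsum : evNorm (f m - fb) ≤ Lf * ((M : ℝ)⁻¹ * ∑ i, evNorm (x i - m)) := by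
    rw [hfm, evNorm_smul, abs_of_nonneg (by positivity : (0:ℝ) ≤ (M:ℝ)⁻¹)]
    have h₁ : evNorm (∑ i, (f m - f (x i))) ≤ ∑ i, evNorm (f m - f (x i)) :=
      evNorm_sum_le _ _
    have h₂ : ∑ i, evNorm (f m - f (x i)) ≤ ∑ i, Lf * evNorm (x i - m) := by
      apply Finset.sum_le_sum
      intro i _
      have := hf m (x i)
      rwa [evNorm_sub_symm m (x i)] at this
    calc (M : ℝ)⁻¹ * evNorm (∑ i, (f m - f (x i)))
        ≤ (M : ℝ)⁻¹ * ∑ i, Lf * evNorm (x i - m) :=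
          mul_le_mul_of_nonneg_left (h₁.trans h₂) (by positivity)
      _ = Lf * ((M : ℝ)⁻¹ * ∑ i, evNorm (x i - m)) := by
          rw [Finset.mul_sum, Finset.mul_sum, Finset.mul_sum]
          exact Finset.sum_congr rfl fun i _ => by ring
  -- power mean: (M⁻¹ ∑ a_i) ≤ √(M⁻¹ ∑ a_i²)
  have hpm : (M : ℝ)⁻¹ * ∑ i, evNorm (x i - m) ≤ Real.sqrt (spread M n x) := by
    set S := ∑ i, evNorm (x i - m) with hS
    set Q := ∑ i, sqNorm (x i - m) with hQ
    have hSnn : 0 ≤ S := Finset.sum_nonneg fun i _ => evNorm_nonneg _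
    have hQnn : 0 ≤ Q := Finset.sum_nonneg fun i _ => sqNorm_nonneg _
    have hcs : S ^ 2 ≤ (M : ℝ) * Q := by
      have := Finset.sum_mul_sq_le_sq_mul_sq Finset.univ (fun _ : Fin M => (1:ℝ))
        (fun i => evNorm (x i - m))
      simp only [one_pow, mul_one, one_mul, Finset.sum_const, Finset.card_univ,
        Fintype.card_fin, nsmul_eq_mul] at this
      calc S ^ 2 ≤ (M : ℝ) * ∑ i, evNorm (x i - m) ^ 2 := this
        _ = (M : ℝ) * Q := by
            congr 1
            exact Finset.sum_congr rfl fun i _ => evNorm_sq _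
    have hspread : spread M n x = ((M : ℝ) - 1)⁻¹ * Q := rfl
    have hM1 : (0 : ℝ) < (M : ℝ) - 1 := by linarith
    have hle : (M : ℝ)⁻¹ * Q ≤ ((M : ℝ) - 1)⁻¹ * Q := by
      apply mul_le_mul_of_nonneg_right _ hQnn
      apply inv_anti₀ hM1 (by linarith)
    rw [hspread]
    have : (M : ℝ)⁻¹ * S ≤ Real.sqrt ((M : ℝ)⁻¹ * Q) := by
      rw [show (M : ℝ)⁻¹ * S = Real.sqrt (((M : ℝ)⁻¹ * S) ^ 2) from
        (Real.sqrt_sq (by positivity)).symm]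
      apply Real.sqrt_le_sqrt
      have : ((M : ℝ)⁻¹ * S) ^ 2 = (M : ℝ)⁻¹ * ((M : ℝ)⁻¹ * S ^ 2) := by ring
      rw [this]
      have h2 : (M : ℝ)⁻¹ * S ^ 2 ≤ Q := by
        rw [inv_mul_le_iff₀ hMpos]; linarith
      exact mul_le_mul_of_nonneg_left h2 (by positivity)
    exact this.trans (Real.sqrt_le_sqrt hle)
  -- second term bound
  have h2 : eip (f m - fb) (z - m) ≤ Lf * Real.sqrt (spread M n x) * evNorm (z - m) := by
    calc eip (f m - fb) (z - m) ≤ evNorm (f m - fb) * evNorm (z - m) := eip_le_norm _ _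
      _ ≤ (Lf * Real.sqrt (spread M n x)) * evNorm (z - m) := by
          apply mul_le_mul_of_nonneg_right _ (evNorm_nonneg _)
          exact hsum.trans (mul_le_mul_of_nonneg_left hpm hLf)
  -- norm identity
  have h4 : evNorm (z - m) = Real.sqrt 2 * Real.sqrt (sqNorm (z - m) / 2) := by
    rw [evNorm, ← Real.sqrt_mul (by norm_num : (0:ℝ) ≤ 2)]
    congr 1; ring
  rw [hsplit]
  have h2' : eip (f m - fb) (z - m) ≤
      Real.sqrt 2 * Lf * Real.sqrt (spread M n x) * Real.sqrt (sqNorm (z - m) / 2) := by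
    rw [h4] at h2; linarith [h2]
  have h1' : eip (f z - f m) (z - m) ≤ 2 * Lp * (sqNorm (z - m) / 2) := by
    calc eip (f z - f m) (z - m) ≤ Lp * sqNorm (z - m) := h1
      _ = 2 * Lp * (sqNorm (z - m) / 2) := by ring
  linarith

end
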